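/- Let G be a connected simple graph on a finite vertex set V and let P : V → Fin k (k ≥ 1) be a surjective map such that each cluster P⁻¹(r) induces a connected subgraph of G. Then there exists a set D of cross edges of G with respect to P such that the graph G^D obtained from G by deleting the edges in D is connected and has exactly k − 1 cross edges with respect to P; in particular, P is a tree partition of the post-switching network G^D. -/

import Mathlib

open Matrix

variable {V : Type*}

/-- The set of cross edges of `G` with respect to the partition map `P`:
edges of `G` whose two endpoints lie in different clusters. -/
def crossEdges {k : ℕ} (G : SimpleGraph V) (P : V → Fin k) : Set (Sym2 V) :=
  {e | e ∈ G.edgeSet ∧ ¬ (Sym2.map P e).IsDiag}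

/-- The quotient (reduced) graph of `G` under `P`: vertices are the `k` clusters,
and distinct clusters `r`, `s` are adjacent iff `G` has a cross edge with one
endpoint in cluster `r` and the other in cluster `s`. -/
def quotientGraph {k : ℕ} (G : SimpleGraph V) (P : V → Fin k) : SimpleGraph (Fin k) where
  Adj r s := r ≠ s ∧ ∃ u v, G.Adj u v ∧ P u = r ∧ P v = s
  symm := by
    constructor
    rintro r s ⟨hrs, u, v, huv, hu, hv⟩
    exact ⟨hrs.symm, v, u, huv.symm, hv, hu⟩
  loopless := by
    constructor
    rintro r ⟨hrr, -⟩
    exact hrr rfl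

/-- `P` has no parallel cross edges: distinct cross edges of `G` join distinct
(unordered) pairs of clusters. -/
def NoParallelCrossEdges {k : ℕ} (G : SimpleGraph V) (P : V → Fin k) : Prop :=
  ∀ e₁ ∈ crossEdges G P, ∀ e₂ ∈ crossEdges G P, Sym2.map P e₁ = Sym2.map P e₂ → e₁ = e₂


section Aux

open SimpleGraph

lemma sym2_exists_eq {α : Type*} (e : Sym2 α) : ∃ a b, e = s(a, b) :=
  Sym2.ind (fun a b => ⟨a, b, rfl⟩) e

lemma reach_transfer {W : Type*} {G H : SimpleGraph W} {v w : W}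
    (hvw : H.Reachable v w)
    (hcov : ∀ a b, G.Adj a b → H.Adj a b ∨ s(a, b) = s(v, w)) {u x : W}
    (h : G.Reachable u x) : H.Reachable u x := by
  obtain ⟨p⟩ := h
  induction p with
  | nil => exact Reachable.refl _
  | cons h p ih =>
    rename_i a b c
    rcases hcov a b h with h' | h'
    · exact (h'.reachable).trans ih
    · rw [Sym2.eq_iff] at h'
      rcases h' with ⟨rfl, rfl⟩ | ⟨rfl, rfl⟩
      · exact hvw.trans ih
      · exact hvw.symm.trans ih

lemma exists_spanning_tree {W : Type*} [Fintype W] (G : SimpleGraph W) (hG : G.Connected) :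
    ∃ T ≤ G, T.Connected ∧ T.IsAcyclic := by
  classical
  suffices H : ∀ n (G : SimpleGraph W), G.edgeSet.ncard = n → G.Connected →
      ∃ T ≤ G, T.Connected ∧ T.IsAcyclic from H _ G rfl hG
  intro n
  induction n using Nat.strong_induction_on with
  | _ n ih =>
    intro G hn hconn
    by_cases hac : G.IsAcyclic
    · exact ⟨G, le_rfl, hconn, hac⟩
    · rw [isAcyclic_iff_forall_edge_isBridge] at hac
      push_neg at hac
      obtain ⟨e, he, hbr⟩ := hac
      obtain ⟨v, w, rfl⟩ := sym2_exists_eq e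
      set G' := G \ SimpleGraph.fromEdgeSet {s(v, w)} with hG'
      have hle : G' ≤ G := sdiff_le
      have hr : G'.Reachable v w := by
        by_contra hr
        exact hbr hr
      have hcov : ∀ a b, G.Adj a b → G'.Adj a b ∨ s(a, b) = s(v, w) := by
        intro a b hab
        by_cases hs : s(a, b) = s(v, w)
        · exact Or.inr hs
        · exact Or.inl (by simp [hG', sdiff_adj, fromEdgeSet_adj, hs, hab])
      haveI : Nonempty W := hconn.nonempty
      have hconn' : G'.Connected :=
        ⟨fun u x => reach_transfer hr hcov (hconn u x)⟩
      have hes : G'.edgeSet = G.edgeSet \ {s(v, w)} := by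
        rw [hG', edgeSet_sdiff, edgeSet_fromEdgeSet, edgeSet_sdiff_sdiff_isDiag]
      have hlt : G'.edgeSet.ncard < n := by
        rw [hes, ← hn]
        exact Set.ncard_diff_singleton_lt_of_mem he (Set.toFinite _)
      obtain ⟨T, hT, hTc, hTa⟩ := ih _ hlt G' rfl hconn'
      exact ⟨T, hT.trans hle, hTc, hTa⟩

end Aux

theorem exists_tree_partitioning [Fintype V] {k : ℕ} (hk : 1 ≤ k)
    (G : SimpleGraph V) (hG : G.Connected) (P : V → Fin k)
    (hsurj : Function.Surjective P)
    (hcl : ∀ r : Fin k, (G.induce (P ⁻¹' {r})).Connected) :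
    ∃ D ⊆ crossEdges G P,
      (G.deleteEdges D).Connected ∧
      (crossEdges (G.deleteEdges D) P).ncard = k - 1 ∧
      (quotientGraph (G.deleteEdges D) P).IsTree ∧
      NoParallelCrossEdges (G.deleteEdges D) P := by
  classical
  haveI hne : Nonempty V := hG.nonempty
  haveI : Nonempty (Fin k) := ⟨⟨0, hk⟩⟩
  -- the quotient graph is connected
  have hwalk : ∀ {u v : V}, G.Walk u v → (quotientGraph G P).Reachable (P u) (P v) := by
    intro u v p
    induction p with
    | nil => exact SimpleGraph.Reachable.refl _
    | cons h p ih =>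
      rename_i a b c
      by_cases hab : P a = P b
      · rwa [hab]
      · have hadj : (quotientGraph G P).Adj (P a) (P b) := ⟨hab, a, b, h, rfl, rfl⟩
        exact hadj.reachable.trans ih
  have hQconn : (quotientGraph G P).Connected := by
    refine ⟨fun r s => ?_⟩
    obtain ⟨u, rfl⟩ := hsurj r
    obtain ⟨v, rfl⟩ := hsurj s
    obtain ⟨p⟩ := hG u v
    exact hwalk p
  obtain ⟨T, hTQ, hTc, hTa⟩ := exists_spanning_tree _ hQconn
  -- choose a cross edge of G realizing each edge of T
  have hchoice : ∀ e : Sym2 (Fin k), ∃ f : Sym2 V,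
      e ∈ T.edgeSet → f ∈ crossEdges G P ∧ Sym2.map P f = e := by
    intro e
    induction e using Sym2.ind with
    | _ r s =>
      by_cases he : s(r, s) ∈ T.edgeSet
      · have hadj : (quotientGraph G P).Adj r s := hTQ (T.mem_edgeSet.mp he)
        obtain ⟨hner, u, v, huv, hu, hv⟩ := hadj
        refine ⟨s(u, v), fun _ => ⟨⟨huv, ?_⟩, by simp [hu, hv]⟩⟩
        simp only [Sym2.map_pair_eq, Sym2.isDiag_iff_proj_eq, hu, hv]
        exact hner
      · exact ⟨s(Classical.arbitrary V, Classical.arbitrary V), fun h => absurd h he⟩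
  choose g hg using hchoice
  set S : Set (Sym2 V) := g '' T.edgeSet with hS
  have hScross : S ⊆ crossEdges G P := by
    rintro f ⟨e, he, rfl⟩
    exact (hg e he).1
  set D : Set (Sym2 V) := crossEdges G P \ S with hD
  set G' := G.deleteEdges D with hG'
  have hDsub : D ⊆ crossEdges G P := Set.diff_subset
  -- the cross edges of G' are exactly S
  have hcross' : crossEdges G' P = S := by
    ext f
    constructor
    · rintro ⟨hf, hnd⟩
      rw [hG', SimpleGraph.edgeSet_deleteEdges] at hf
      rcases hf with ⟨hf, hfD⟩
      by_contra hfS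
      exact hfD ⟨⟨hf, hnd⟩, hfS⟩
    · intro hf
      obtain ⟨hcr, hnd⟩ := hScross hf
      refine ⟨?_, hnd⟩
      rw [hG', SimpleGraph.edgeSet_deleteEdges]
      exact ⟨hcr, fun hfD => hfD.2 hf⟩
  have hSedge : ∀ f ∈ S, f ∈ G'.edgeSet := fun f hf => ((hcross' ▸ hf : f ∈ crossEdges G' P)).1
  -- intra-cluster reachability in G'
  have hintra : ∀ u v : V, P u = P v → G'.Reachable u v := by
    intro u v huv
    have hu : u ∈ P ⁻¹' {P v} := huv
    have hv : v ∈ P ⁻¹' {P v} := rfl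
    have hreach := (hcl (P v)).preconnected ⟨u, hu⟩ ⟨v, hv⟩
    let F : G.induce (P ⁻¹' {P v}) →g G' := by
      refine ⟨Subtype.val, ?_⟩
      rintro ⟨a, ha⟩ ⟨b, hb⟩ hab
      have hab' : G.Adj a b := hab
      rw [hG', SimpleGraph.deleteEdges_adj]
      refine ⟨hab', fun hmem => ?_⟩
      have hd := (hDsub hmem).2
      simp only [Sym2.map_pair_eq, Sym2.isDiag_iff_proj_eq] at hd
      exact hd (ha.trans hb.symm)
    exact hreach.map F
  -- reachability in G' along walks of T
  have hTreach : ∀ {r s : Fin k}, T.Walk r s → ∀ u v : V, P u = r → P v = s →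
      G'.Reachable u v := by
    intro r s p
    induction p with
    | nil =>
      intro u v hu hv
      exact hintra u v (hu.trans hv.symm)
    | cons h p ih =>
      rename_i r r' s'
      intro u v hu hv
      have hfe : s(r, r') ∈ T.edgeSet := T.mem_edgeSet.mpr h
      have hgS : g s(r, r') ∈ S := ⟨_, hfe, rfl⟩
      obtain ⟨hcr, hmap⟩ := hg _ hfe
      obtain ⟨a, b, hab⟩ := sym2_exists_eq (g s(r, r'))
      have hadj : G'.Adj a b := G'.mem_edgeSet.mp (by rw [← hab]; exact hSedge _ hgS)
      rw [hab, Sym2.map_pair_eq, Sym2.eq_iff] at hmap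
      rcases hmap with ⟨ha, hb⟩ | ⟨ha, hb⟩
      · exact ((hintra u a (hu.trans ha.symm)).trans hadj.reachable).trans (ih b v hb hv)
      · exact ((hintra u b (hu.trans hb.symm)).trans hadj.symm.reachable).trans (ih a v ha hv)
  have hG'conn : G'.Connected := by
    refine ⟨fun u v => ?_⟩
    obtain ⟨p⟩ := hTc (P u) (P v)
    exact hTreach p u v rfl rfl
  -- the quotient of G' is T
  have hquot : quotientGraph G' P = T := by
    ext r s
    constructor
    · rintro ⟨hner, u, v, huv, hu, hv⟩
      have hcr : s(u, v) ∈ crossEdges G' P := by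
        refine ⟨G'.mem_edgeSet.mpr huv, ?_⟩
        simp only [Sym2.map_pair_eq, Sym2.isDiag_iff_proj_eq, hu, hv]
        exact hner
      rw [hcross'] at hcr
      obtain ⟨e, he, hge⟩ := hcr
      have hme := (hg e he).2
      rw [hge] at hme
      simp only [Sym2.map_pair_eq, hu, hv] at hme
      rw [← hme] at he
      exact T.mem_edgeSet.mp he
    · intro h
      have hfe : s(r, s) ∈ T.edgeSet := T.mem_edgeSet.mpr h
      have hgS : g s(r, s) ∈ S := ⟨_, hfe, rfl⟩
      obtain ⟨hcr, hmap⟩ := hg _ hfe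
      obtain ⟨a, b, hab⟩ := sym2_exists_eq (g s(r, s))
      have hadj : G'.Adj a b := G'.mem_edgeSet.mp (by rw [← hab]; exact hSedge _ hgS)
      rw [hab, Sym2.map_pair_eq, Sym2.eq_iff] at hmap
      rcases hmap with ⟨ha, hb⟩ | ⟨ha, hb⟩
      · exact ⟨h.ne, a, b, hadj, ha, hb⟩
      · exact ⟨h.ne, b, a, hadj.symm, hb, ha⟩
  -- cardinality
  haveI : Fintype T.edgeSet := (Set.toFinite _).fintype
  have hcard : (crossEdges G' P).ncard = k - 1 := by
    rw [hcross', hS]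
    have hinj : Set.InjOn g T.edgeSet := by
      intro a ha b hb hgab
      rw [← (hg a ha).2, ← (hg b hb).2, hgab]
    rw [Set.ncard_image_of_injOn hinj]
    have htree : T.IsTree := ⟨hTc, hTa⟩
    have hcf := htree.card_edgeFinset
    rw [Fintype.card_fin] at hcf
    have : T.edgeSet.ncard = T.edgeFinset.card := by
      rw [Set.ncard_eq_toFinset_card']
      exact congrArg Finset.card (by ext; simp)
    omega
  refine ⟨D, hDsub, hG'conn, hcard, ?_, ?_⟩
  · rw [hquot]
    exact ⟨hTc, hTa⟩
  · intro e₁ h₁ e₂ h₂ hmap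
    rw [show crossEdges (G.deleteEdges D) P = crossEdges G' P from rfl, hcross'] at h₁ h₂
    obtain ⟨a, ha, rfl⟩ := h₁
    obtain ⟨b, hb, rfl⟩ := h₂
    rw [(hg a ha).2, (hg b hb).2] at hmap
    rw [hmap]
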